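/- For every positive integer n, the number of partitions of n of the form ((n_1)^{n_1+2s}, (n_2)^{2t_2}, ..., (n_k)^{2t_k}) with n_1 > n_2 > ... > n_k > 0, s ≥ 0, t_i ≥ 1, and with total number of parts ℓ ≡ l (mod 2), summed with sign (-1)^ℓ over all such partitions, equals the coefficient of q^n in ∑_{l=1}^{∞} (-1)^l q^{l^2}/∏_{j=1}^{l}(1-q^{2j}). -/

import Mathlib

open Finset

/-- A partition is harmonic with largest part `a` if `a` is its largest part, the
multiplicity of `a` is `a + 2s` for some `s ≥ 0`, and every other part has even
multiplicity. -/
def IsHarmonicWithMax {n : ℕ} (a : ℕ) (p : n.Partition) : Prop :=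
  a ∈ p.parts ∧ (∀ b ∈ p.parts, b ≤ a) ∧
    a ≤ p.parts.count a ∧ Even (p.parts.count a - a) ∧
    ∀ b ∈ p.parts, b ≠ a → Even (p.parts.count b)

/-- A harmonic partition: of the form `((n₁)^{n₁+2s}, (n₂)^{2t₂}, …, (n_k)^{2t_k})`. -/
def IsHarmonic {n : ℕ} (p : n.Partition) : Prop :=
  ∃ a, IsHarmonicWithMax a p

open scoped Classical
open PowerSeries

noncomputable section HarmonicAux

open Finset.HasAntidiagonal

variable {α : Type*}

/-- A convenience constructor for the power series whose coefficients indicate a subset. -/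
def indicatorSeries (α : Type*) [Semiring α] (s : Set ℕ) : PowerSeries α :=
  PowerSeries.mk fun n => if n ∈ s then 1 else 0

theorem coeff_indicator (s : Set ℕ) [Semiring α] (n : ℕ) :
    coeff (R := α) n (indicatorSeries _ s) = if n ∈ s then 1 else 0 :=
  coeff_mk _ _

theorem coeff_indicator_pos (s : Set ℕ) [Semiring α] (n : ℕ) (h : n ∈ s) :
    coeff (R := α) n (indicatorSeries _ s) = 1 := by rw [coeff_indicator, if_pos h]

theorem coeff_indicator_neg (s : Set ℕ) [Semiring α] (n : ℕ) (h : n ∉ s) :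
    coeff (R := α) n (indicatorSeries _ s) = 0 := by rw [coeff_indicator, if_neg h]

theorem constantCoeff_indicator (s : Set ℕ) [Semiring α] :
    constantCoeff (R := α) (indicatorSeries _ s) = if 0 ∈ s then 1 else 0 :=
  rfl

theorem num_series' [Field α] (i : ℕ) :
    (1 - (X : PowerSeries α) ^ (i + 1))⁻¹ = indicatorSeries α {k | i + 1 ∣ k} := by
  rw [PowerSeries.inv_eq_iff_mul_eq_one]
  · ext n
    cases n with
    | zero => simp [mul_sub, zero_pow, constantCoeff_indicator]
    | succ n =>
      simp only [coeff_one, if_false, mul_sub, mul_one, coeff_indicator,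
        LinearMap.map_sub, reduceCtorEq]
      simp_rw [coeff_mul, coeff_X_pow, coeff_indicator, @boole_mul _ _ _ _]
      erw [@sum_ite _ _ _ _ _ (fun _ => Classical.propDecidable _), sum_ite]
      simp_rw [@filter_filter _ _ _ _ _, sum_const_zero, add_zero, sum_const, nsmul_eq_mul, mul_one,
        sub_eq_iff_eq_add, zero_add]
      symm
      split_ifs with h
      · suffices #{a ∈ antidiagonal (n + 1) | i + 1 ∣ a.fst ∧ a.snd = i + 1} = 1 by
          simp only [Set.mem_setOf_eq]; convert congr_arg ((↑) : ℕ → α) this; norm_cast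
        rw [card_eq_one]
        cases' h with p hp
        refine ⟨((i + 1) * (p - 1), i + 1), ?_⟩
        ext ⟨a₁, a₂⟩
        simp only [mem_filter, Prod.mk_inj, HasAntidiagonal.mem_antidiagonal, mem_singleton]
        constructor
        · rintro ⟨a_left, ⟨a, rfl⟩, rfl⟩
          refine ⟨?_, rfl⟩
          rw [Nat.mul_sub_left_distrib, ← hp, ← a_left, mul_one, Nat.add_sub_cancel]
        · rintro ⟨rfl, rfl⟩
          match p with
          | 0 => rw [mul_zero] at hp; cases hp
          | p + 1 => rw [hp]; simp [mul_add]
      · suffices #{a ∈ antidiagonal (n + 1) | i + 1 ∣ a.fst ∧ a.snd = i + 1} = 0 by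
          simp only [Set.mem_setOf_eq]; convert congr_arg ((↑) : ℕ → α) this; norm_cast
        rw [card_eq_zero]
        apply eq_empty_of_forall_notMem
        simp only [Prod.forall, mem_filter, not_and, HasAntidiagonal.mem_antidiagonal]
        rintro _ h₁ h₂ ⟨a, rfl⟩ rfl
        apply h
        simp [← h₂]
  · simp [zero_pow]

theorem partialGF_prop (α : Type*) [CommSemiring α] (n : ℕ) (s : Finset ℕ) (hs : ∀ i ∈ s, 0 < i)
    (c : ℕ → Set ℕ) (hc : ∀ i, i ∉ s → 0 ∈ c i) :
    #{p : n.Partition | (∀ j, p.parts.count j ∈ c j) ∧ ∀ j ∈ p.parts, j ∈ s} =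
      coeff (R := α) n (∏ i ∈ s, indicatorSeries α ((· * i) '' c i)) := by
  simp_rw [coeff_prod, coeff_indicator, prod_boole, sum_boole]
  apply congr_arg
  simp only [mem_univ, forall_true_left, not_and, not_forall, exists_prop,
    Set.mem_image, not_exists]
  set φ : (a : Nat.Partition n) →
    a ∈ filter (fun p ↦ (∀ (j : ℕ), Multiset.count j p.parts ∈ c j) ∧ ∀ j ∈ p.parts, j ∈ s) univ →
    ℕ →₀ ℕ := fun p _ => {
      toFun := fun i => Multiset.count i p.parts • i
      support := Finset.filter (fun i => i ≠ 0) p.parts.toFinset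
      mem_support_toFun := fun a => by
        simp only [smul_eq_mul, ne_eq, mul_eq_zero, Multiset.count_eq_zero]
        rw [not_or, not_not]
        simp only [Multiset.mem_toFinset, not_not, mem_filter] }
  refine Finset.card_bij φ ?_ ?_ ?_
  · intro a ha
    simp only [φ, not_forall, not_exists, not_and, exists_prop, mem_filter]
    rw [mem_finsuppAntidiag]
    dsimp only [ne_eq, smul_eq_mul, id_eq, eq_mpr_eq_cast, le_eq_subset, Finsupp.coe_mk]
    simp only [mem_univ, forall_true_left, not_and, not_forall, exists_prop,
      mem_filter, true_and] at ha
    refine ⟨⟨?_, fun i ↦ ?_⟩, fun i _ ↦ ⟨a.parts.count i, ha.1 i, rfl⟩⟩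
    · conv_rhs => simp [← a.parts_sum]
      rw [sum_multiset_count_of_subset _ s]
      · simp only [smul_eq_mul]
      · intro i
        simp only [Multiset.mem_toFinset, not_not, mem_filter]
        apply ha.2
    · simp only [ne_eq, Multiset.mem_toFinset, not_not, mem_filter, and_imp]
      exact fun hi _ ↦ ha.2 i hi
  · intro p₁ hp₁ p₂ hp₂ h
    apply Nat.Partition.ext
    simp only [true_and, mem_univ, mem_filter] at hp₁ hp₂
    ext i
    simp only [φ, ne_eq, Multiset.mem_toFinset, not_not, smul_eq_mul, Finsupp.mk.injEq] at h
    by_cases hi : i = 0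
    · rw [hi]
      rw [Multiset.count_eq_zero_of_notMem]
      · rw [Multiset.count_eq_zero_of_notMem]
        intro a; exact Nat.lt_irrefl 0 (hs 0 (hp₂.2 0 a))
      intro a; exact Nat.lt_irrefl 0 (hs 0 (hp₁.2 0 a))
    · rw [← mul_left_inj' hi]
      rw [funext_iff] at h
      exact h.2 i
  · simp only [φ, mem_filter, mem_finsuppAntidiag, mem_univ, exists_prop, true_and, and_assoc]
    rintro f ⟨hf, hf₃, hf₄⟩
    have hf' : f ∈ finsuppAntidiag s n := mem_finsuppAntidiag.mpr ⟨hf, hf₃⟩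
    simp only [mem_finsuppAntidiag] at hf'
    refine ⟨⟨∑ i ∈ s, Multiset.replicate (f i / i) i, ?_, ?_⟩, ?_, ?_, ?_⟩
    · intro i hi
      simp only [exists_prop, Multiset.mem_sum, mem_map, Function.Embedding.coeFn_mk] at hi
      rcases hi with ⟨t, ht, z⟩
      apply hs
      rwa [Multiset.eq_of_mem_replicate z]
    · simp_rw [Multiset.sum_sum, Multiset.sum_replicate, Nat.nsmul_eq_mul]
      rw [← hf'.1]
      refine sum_congr rfl fun i hi => Nat.div_mul_cancel ?_
      rcases hf₄ i hi with ⟨w, _, hw₂⟩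
      rw [← hw₂]
      exact dvd_mul_left _ _
    · intro i
      simp_rw [Multiset.count_sum', Multiset.count_replicate, sum_ite_eq']
      split_ifs with h
      · rcases hf₄ i h with ⟨w, hw₁, hw₂⟩
        rwa [← hw₂, Nat.mul_div_cancel _ (hs i h)]
      · exact hc _ h
    · intro i hi
      rw [Multiset.mem_sum] at hi
      rcases hi with ⟨j, hj₁, hj₂⟩
      rwa [Multiset.eq_of_mem_replicate hj₂]
    · ext i
      simp_rw [Multiset.count_sum', Multiset.count_replicate, sum_ite_eq']
      simp only [ne_eq, Multiset.mem_toFinset, not_not, smul_eq_mul, ite_mul,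
        zero_mul, Finsupp.coe_mk]
      split_ifs with h
      · apply Nat.div_mul_cancel
        rcases hf₄ i h with ⟨w, _, hw₂⟩
        apply Dvd.intro_left _ hw₂
      · apply symm
        rw [← Finsupp.notMem_support_iff]
        exact notMem_mono hf'.2 h

/-- The multiplicity constraint sets for harmonic partitions with max `L`. -/
def cSet (L i : ℕ) : Set ℕ :=
  if i = L then {m | L ≤ m ∧ Even (m - L)} else {m | Even m}

lemma constCoeff_factor (j : ℕ) :
    constantCoeff (R := ℚ) (1 - (X : PowerSeries ℚ) ^ (2 * (j + 1))) = 1 := by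
  rw [map_sub, map_one, map_pow, constantCoeff_X, zero_pow (by omega : 2 * (j + 1) ≠ 0), sub_zero]

lemma prod_inv_eq (L : ℕ) :
    (∏ j ∈ range L, (1 - (X : PowerSeries ℚ) ^ (2 * (j + 1))))⁻¹ =
      ∏ j ∈ range L, (1 - (X : PowerSeries ℚ) ^ (2 * (j + 1)))⁻¹ := by
  rw [PowerSeries.inv_eq_iff_mul_eq_one]
  · rw [← Finset.prod_mul_distrib]
    apply Finset.prod_eq_one
    intro j _
    exact PowerSeries.inv_mul_cancel _ (by rw [constCoeff_factor]; exact one_ne_zero)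
  · rw [map_prod]
    simp_rw [constCoeff_factor]
    simp

lemma inv_factor (j : ℕ) :
    (1 - (X : PowerSeries ℚ) ^ (2 * (j + 1)))⁻¹ =
      indicatorSeries ℚ {k | 2 * (j + 1) ∣ k} := by
  rw [show 2 * (j + 1) = (2 * j + 1) + 1 by ring, num_series']

lemma even_image (j : ℕ) : (· * (j + 1)) '' {m | Even m} = {k | 2 * (j + 1) ∣ k} := by
  ext k
  simp only [Set.mem_image, Set.mem_setOf_eq]
  constructor
  · rintro ⟨m, ⟨t, rfl⟩, rfl⟩
    exact ⟨t, by ring⟩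
  · rintro ⟨t, rfl⟩
    exact ⟨2 * t, ⟨t, by ring⟩, by ring⟩

lemma max_image (L : ℕ) :
    (· * L) '' {m | L ≤ m ∧ Even (m - L)} = {k | L ^ 2 ≤ k ∧ 2 * L ∣ k - L ^ 2} := by
  ext k
  simp only [Set.mem_image, Set.mem_setOf_eq]
  constructor
  · rintro ⟨m, ⟨hm, t, ht⟩, rfl⟩
    have hm2 : m = L + (t + t) := by omega
    subst hm2
    constructor
    · have : (L + (t + t)) * L = L ^ 2 + (2 * L) * t := by ring
      omega
    · refine ⟨t, ?_⟩
      have : (L + (t + t)) * L = L ^ 2 + (2 * L) * t := by ring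
      omega
  · rintro ⟨h1, t, ht⟩
    refine ⟨L + (t + t), ⟨by omega, t, by omega⟩, ?_⟩
    have : (L + (t + t)) * L = L ^ 2 + (2 * L) * t := by ring
    omega

lemma X_pow_mul_indicator (a : ℕ) (S : Set ℕ) :
    (X : PowerSeries ℚ) ^ a * indicatorSeries ℚ S =
      indicatorSeries ℚ {k | a ≤ k ∧ (k - a) ∈ S} := by
  ext n
  rw [mul_comm, PowerSeries.coeff_mul_X_pow', coeff_indicator, coeff_indicator]
  simp only [Set.mem_setOf_eq]
  by_cases h : a ≤ n
  · rw [if_pos h]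
    by_cases h2 : (n - a) ∈ S
    · rw [if_pos h2, if_pos ⟨h, h2⟩]
    · rw [if_neg h2, if_neg (fun hh => h2 hh.2)]
  · rw [if_neg h, if_neg (fun hh => h hh.1)]

lemma term_eq (l : ℕ) :
    (X : PowerSeries ℚ) ^ ((l + 1) ^ 2) *
        (∏ j ∈ range (l + 1), (1 - (X : PowerSeries ℚ) ^ (2 * (j + 1))))⁻¹ =
      ∏ i ∈ (range (l + 1)).image (· + 1),
        indicatorSeries ℚ ((· * i) '' cSet (l + 1) i) := by
  rw [prod_inv_eq, Finset.prod_image (fun a _ b _ h => by omega)]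
  rw [Finset.prod_range_succ, Finset.prod_range_succ, mul_left_comm]
  congr 1
  · refine Finset.prod_congr rfl fun j hj => ?_
    rw [inv_factor, ← even_image]
    congr 1
    rw [show cSet (l + 1) (j + 1) = {m | Even m} from
      if_neg (by simp only [mem_range] at hj; omega)]
  · rw [inv_factor, X_pow_mul_indicator]
    congr 1
    rw [show cSet (l + 1) (l + 1) = {m | l + 1 ≤ m ∧ Even (m - (l + 1))} from if_pos rfl,
      max_image]
    rfl

lemma mem_image_succ (L j : ℕ) : j ∈ (range L).image (· + 1) ↔ 0 < j ∧ j ≤ L := by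
  simp only [Finset.mem_image, mem_range]
  constructor
  · rintro ⟨a, ha, rfl⟩; omega
  · rintro ⟨h1, h2⟩; exact ⟨j - 1, by omega, by omega⟩

lemma cond_iff {n : ℕ} (l : ℕ) (p : n.Partition) :
    ((∀ j, p.parts.count j ∈ cSet (l + 1) j) ∧
        ∀ j ∈ p.parts, j ∈ (range (l + 1)).image (· + 1)) ↔
      IsHarmonicWithMax (l + 1) p := by
  constructor
  · rintro ⟨h1, h2⟩
    have hL := h1 (l + 1)
    rw [show cSet (l + 1) (l + 1) = {m | l + 1 ≤ m ∧ Even (m - (l + 1))} from if_pos rfl] at hL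
    obtain ⟨hcnt, hev⟩ := hL
    refine ⟨Multiset.count_pos.mp (by omega), fun b hb => ?_, hcnt, hev, fun b hb hne => ?_⟩
    · exact ((mem_image_succ _ _).mp (h2 b hb)).2
    · have := h1 b
      rwa [show cSet (l + 1) b = {m | Even m} from if_neg hne] at this
  · rintro ⟨hmem, hle, hcnt, hev, hoth⟩
    constructor
    · intro j
      by_cases hj : j = l + 1
      · subst hj
        rw [show cSet (l + 1) (l + 1) = {m | l + 1 ≤ m ∧ Even (m - (l + 1))} from if_pos rfl]
        exact ⟨hcnt, hev⟩
      · rw [show cSet (l + 1) j = {m | Even m} from if_neg hj]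
        by_cases hjp : j ∈ p.parts
        · exact hoth j hjp hj
        · rw [Multiset.count_eq_zero_of_notMem hjp]; exact Even.zero
    · intro j hj
      exact (mem_image_succ _ _).mpr ⟨p.parts_pos hj, hle j hj⟩

lemma coeff_term_eq (n l : ℕ) :
    (coeff (R := ℚ) n) ((X : PowerSeries ℚ) ^ ((l + 1) ^ 2) *
        (∏ j ∈ range (l + 1), (1 - (X : PowerSeries ℚ) ^ (2 * (j + 1))))⁻¹) =
      ((Finset.univ.filter fun p : n.Partition => IsHarmonicWithMax (l + 1) p).card : ℚ) := by
  rw [term_eq]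
  rw [← partialGF_prop ℚ n ((range (l + 1)).image (· + 1))
    (fun i hi => ((mem_image_succ _ _).mp hi).1) (cSet (l + 1))
    (fun i hi => ?_)]
  · rw [Finset.filter_congr (fun p _ => cond_iff l p)]
  · rw [show cSet (l + 1) i = {m | Even m} from
      if_neg (fun h => hi (by rw [h]; exact (mem_image_succ _ _).mpr ⟨by omega, le_rfl⟩))]
    exact Even.zero

lemma max_unique {n : ℕ} {a b : ℕ} {p : n.Partition} (ha : IsHarmonicWithMax a p)
    (hb : IsHarmonicWithMax b p) : a = b :=
  le_antisymm (hb.2.1 a ha.1) (ha.2.1 b hb.1)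

lemma sign_eq {n a : ℕ} {p : n.Partition} (h : IsHarmonicWithMax a p) :
    (-1 : ℚ) ^ (Multiset.card p.parts) = (-1) ^ a := by
  obtain ⟨ha, hle, hc, ⟨s2, hs2⟩, hoth⟩ := h
  have hcard : Multiset.card p.parts = ∑ i ∈ p.parts.toFinset, p.parts.count i :=
    (Multiset.toFinset_sum_count_eq _).symm
  have hmem : a ∈ p.parts.toFinset := Multiset.mem_toFinset.mpr ha
  rw [← Finset.add_sum_erase _ _ hmem] at hcard
  have heven : Even (∑ i ∈ p.parts.toFinset.erase a, p.parts.count i) := by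
    apply Finset.even_sum
    intro i hi
    obtain ⟨hne, hi2⟩ := Finset.mem_erase.mp hi
    exact hoth i (Multiset.mem_toFinset.mp hi2) hne
  obtain ⟨t, ht⟩ := heven
  have hcard2 : Multiset.card p.parts = a + ((s2 + t) + (s2 + t)) := by omega
  rw [hcard2, pow_add, Even.neg_one_pow ⟨s2 + t, rfl⟩, mul_one]

lemma harmonic_max_le {n : ℕ} {a : ℕ} {p : n.Partition} (h : IsHarmonicWithMax a p) : a ≤ n := by
  calc a ≤ p.parts.sum := Multiset.single_le_sum (fun x _ => Nat.zero_le x) _ h.1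
    _ = n := p.parts_sum

end HarmonicAux

/-- The sum of `(-1)^{length σ}` over harmonic partitions `σ` of `n` equals the
coefficient of `q^n` in `∑_{l=1}^∞ (-1)^l q^{l²} / ∏_{j=1}^{l} (1 - q^{2j})`
(truncating the sum at `l = n + 1`, which does not affect the coefficient of `q^n`). -/
theorem harmonic_signed_sum_eq_coeff (n : ℕ) (hn : 0 < n) :
    (∑ p ∈ Finset.univ.filter fun p : n.Partition => IsHarmonic p,
        (-1 : ℚ) ^ (Multiset.card p.parts)) =
    (PowerSeries.coeff (R := ℚ) n) (∑ l ∈ Finset.range (n + 1),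
      ((-1 : PowerSeries ℚ) ^ (l + 1) * (X : PowerSeries ℚ) ^ ((l + 1) ^ 2) *
        (∏ j ∈ Finset.range (l + 1), (1 - (X : PowerSeries ℚ) ^ (2 * (j + 1))))⁻¹)) := by
  rw [map_sum]
  have hC : (PowerSeries.C (R := ℚ)) (-1) = (-1 : PowerSeries ℚ) := by simp
  have hterm : ∀ l ∈ Finset.range (n + 1),
      (coeff (R := ℚ) n) ((-1 : PowerSeries ℚ) ^ (l + 1) * (X : PowerSeries ℚ) ^ ((l + 1) ^ 2) *
          (∏ j ∈ Finset.range (l + 1), (1 - (X : PowerSeries ℚ) ^ (2 * (j + 1))))⁻¹) =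
        (-1 : ℚ) ^ (l + 1) *
          ((Finset.univ.filter fun p : n.Partition => IsHarmonicWithMax (l + 1) p).card : ℚ) := by
    intro l _
    rw [mul_assoc, ← hC, ← map_pow, PowerSeries.coeff_C_mul, coeff_term_eq]
  rw [Finset.sum_congr rfl hterm]
  have hcover : (Finset.univ.filter fun p : n.Partition => IsHarmonic p) =
      (Finset.range (n + 1)).biUnion
        (fun l => Finset.univ.filter fun p : n.Partition => IsHarmonicWithMax (l + 1) p) := by
    ext p
    simp only [Finset.mem_filter, Finset.mem_biUnion, Finset.mem_range, Finset.mem_univ, true_and]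
    constructor
    · rintro ⟨a, ha⟩
      have h1 : 0 < a := p.parts_pos ha.1
      have h2 : a ≤ n := harmonic_max_le ha
      exact ⟨a - 1, by omega, by rwa [show a - 1 + 1 = a by omega]⟩
    · rintro ⟨l, _, h⟩
      exact ⟨l + 1, h⟩
  have hdisj : (↑(Finset.range (n + 1)) : Set ℕ).PairwiseDisjoint
      (fun l => Finset.univ.filter fun p : n.Partition => IsHarmonicWithMax (l + 1) p) := by
    intro l₁ _ l₂ _ hne
    refine Finset.disjoint_left.mpr fun p h1 h2 => ?_
    simp only [Finset.mem_filter] at h1 h2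
    exact hne (by have := max_unique h1.2 h2.2; omega)
  rw [hcover, Finset.sum_biUnion hdisj]
  refine Finset.sum_congr rfl fun l _ => ?_
  rw [Finset.sum_congr rfl (fun p hp => sign_eq (Finset.mem_filter.mp hp).2),
    Finset.sum_const, nsmul_eq_mul, mul_comm]
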